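/- If (U, V) is a bivariate Gaussian vector with means (μ_x, μ_o), variances (K_xx, K_oo) and covariance K_xo, with s² := K_xx + K_oo − 2K_xo > 0, and σ > 0, then E[U·1_{U > V + σ}] = μ_x·(1 − Φ((μ_o + σ − μ_x)/s)) + ((K_xx − K_xo)/s)·φ((μ_o + σ − μ_x)/s). -/

import Mathlib

open MeasureTheory ProbabilityTheory Real

/-- Standard normal PDF. -/
noncomputable def stdPDF (x : ℝ) : ℝ := (Real.sqrt (2 * Real.pi))⁻¹ * Real.exp (-(x ^ 2) / 2)

/-- Standard normal CDF. -/
noncomputable def stdCDF (x : ℝ) : ℝ := ∫ t in Set.Iic x, stdPDF t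

open NNReal ENNReal

lemma stdPDF_eq (x : ℝ) : gaussianPDFReal 0 1 x = stdPDF x := by
  simp [gaussianPDFReal, stdPDF]

lemma integrable_id_gaussianReal (m : ℝ) (v : ℝ≥0) : Integrable id (gaussianReal m v) := by
  by_cases hv : v = 0
  · rw [hv, gaussianReal_zero_var]
    refine (integrable_const m).congr ?_
    rw [Filter.EventuallyEq, MeasureTheory.ae_dirac_eq]
    simp
  · rw [gaussianReal_of_var_ne_zero m hv]
    rw [integrable_withDensity_iff (measurable_gaussianPDF m v)
      (Filter.Eventually.of_forall fun x => ENNReal.ofReal_lt_top)]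
    have hb : (0:ℝ) < ((2:ℝ) * (v:ℝ))⁻¹ := by
      have : (0:ℝ) < (v:ℝ) := lt_of_le_of_ne (v.coe_nonneg) (by exact_mod_cast (Ne.symm hv))
      positivity
    set b : ℝ := ((2:ℝ) * (v:ℝ))⁻¹ with hbdef
    have key : Integrable (fun x : ℝ => (x + m) * Real.exp (-b * x^2)) := by
      have h1 := integrable_mul_exp_neg_mul_sq hb
      have h2 := (integrable_exp_neg_mul_sq hb).const_mul m
      refine (h1.add h2).congr (Filter.Eventually.of_forall fun x => ?_)
      simp only [Pi.add_apply]
      ring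
    have key2 := (key.comp_sub_right m).const_mul (Real.sqrt (2 * Real.pi * v))⁻¹
    refine key2.congr ?_
    refine Filter.Eventually.of_forall fun x => ?_
    simp only [gaussianPDF, gaussianPDFReal]
    rw [ENNReal.toReal_ofReal (by positivity)]
    have harg : -b * (x - m)^2 = -(x - m)^2 / (2 * (v:ℝ)) := by
      rw [hbdef]; ring
    rw [harg]
    simp only [id_eq]
    ring

lemma gaussianReal_eq_map (m : ℝ) (v : ℝ) (hv : 0 < v) :
    gaussianReal m v.toNNReal
      = Measure.map (fun z => Real.sqrt v * z + m) (gaussianReal 0 1) := by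
  have h1 : Measure.map (fun z : ℝ => Real.sqrt v * z) (gaussianReal 0 1)
      = gaussianReal 0 v.toNNReal := by
    rw [show (fun z : ℝ => Real.sqrt v * z) = (Real.sqrt v * ·) from rfl,
      gaussianReal_map_const_mul]
    congr 1
    · ring
    · ext
      simp [Real.sq_sqrt hv.le, Real.coe_toNNReal _ hv.le]
  have h2 : Measure.map (· + m) (gaussianReal 0 (v.toNNReal))
      = gaussianReal m v.toNNReal := by
    rw [gaussianReal_map_add_const]; congr 1; ring
  have h3 := Measure.map_map (μ := gaussianReal 0 1) (g := fun x : ℝ => x + m)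
    (f := fun z : ℝ => Real.sqrt v * z) (measurable_id.add_const m)
    (measurable_id.const_mul _)
  rw [← h2, ← h1, h3]
  rfl

lemma stdPDF_nonneg (x : ℝ) : 0 ≤ stdPDF x := by
  rw [← stdPDF_eq]; exact gaussianPDFReal_nonneg 0 1 x

lemma continuous_stdPDF : Continuous stdPDF := by
  unfold stdPDF; fun_prop

lemma integrable_stdPDF : Integrable stdPDF := by
  refine (integrable_gaussianPDFReal 0 1).congr ?_
  exact Filter.Eventually.of_forall fun x => stdPDF_eq x

lemma integral_stdPDF : ∫ x, stdPDF x = 1 := by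
  have h := integral_gaussianPDFReal_eq_one 0 (one_ne_zero)
  rw [← h]
  exact integral_congr_ae (Filter.Eventually.of_forall fun x => (stdPDF_eq x).symm)

lemma std_withDensity :
    gaussianReal 0 1 = volume.withDensity (fun x => ENNReal.ofReal (stdPDF x)) := by
  rw [gaussianReal_of_var_ne_zero 0 one_ne_zero]
  congr 1
  funext x
  rw [gaussianPDF, stdPDF_eq]

lemma integral_stdgauss (f : ℝ → ℝ) :
    ∫ x, f x ∂(gaussianReal 0 1) = ∫ x, f x * stdPDF x := by
  rw [std_withDensity]
  have hmeas : Measurable (fun x => Real.toNNReal (stdPDF x)) :=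
    continuous_stdPDF.measurable.real_toNNReal
  have : (fun x => ENNReal.ofReal (stdPDF x))
      = fun x => ((Real.toNNReal (stdPDF x) : ℝ≥0) : ℝ≥0∞) := rfl
  rw [this, integral_withDensity_eq_integral_smul hmeas]
  congr 1
  funext x
  rw [NNReal.smul_def, Real.coe_toNNReal _ (stdPDF_nonneg x), smul_eq_mul, mul_comm]

lemma integrable_mul_stdPDF : Integrable (fun z : ℝ => z * stdPDF z) := by
  have h := (integrable_mul_exp_neg_mul_sq (b := (1:ℝ)/2) (by norm_num)).const_mul
    (Real.sqrt (2 * Real.pi))⁻¹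
  refine h.congr (Filter.Eventually.of_forall fun x => ?_)
  show (Real.sqrt (2 * Real.pi))⁻¹ * (x * Real.exp (-(1/2) * x^2)) = x * stdPDF x
  unfold stdPDF
  rw [show -(1/2 : ℝ) * x^2 = -(x^2)/2 by ring]
  ring

lemma tendsto_stdPDF_atTop : Filter.Tendsto stdPDF Filter.atTop (nhds 0) := by
  unfold stdPDF
  rw [show (0:ℝ) = (Real.sqrt (2 * Real.pi))⁻¹ * 0 by ring]
  refine Filter.Tendsto.const_mul _ ?_
  refine Real.tendsto_exp_atBot.comp ?_
  have h : Filter.Tendsto (fun x : ℝ => x^2) Filter.atTop Filter.atTop :=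
    Filter.tendsto_pow_atTop (two_ne_zero)
  have := (Filter.tendsto_neg_atBot_iff.mpr h).atBot_div_const (by norm_num : (0:ℝ) < 2)
  simpa [neg_div] using this

lemma J1 (α : ℝ) : ∫ z in Set.Ioi α, z * stdPDF z = stdPDF α := by
  have hderiv : ∀ x ∈ Set.Ici α, HasDerivAt (fun z => -stdPDF z) (x * stdPDF x) x := by
    intro x _
    unfold stdPDF
    have h1 : HasDerivAt (fun z : ℝ => -(z^2)/2) (-x) x := by
      have := (hasDerivAt_pow 2 x).neg.div_const 2
      simpa using this.congr_deriv (by ring)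
    have h2 := (Real.hasDerivAt_exp (-(x^2)/2)).comp x h1
    have h3 := (h2.const_mul (Real.sqrt (2 * Real.pi))⁻¹).neg
    refine h3.congr_deriv ?_
    ring
  have hint : IntegrableOn (fun z : ℝ => z * stdPDF z) (Set.Ioi α) :=
    integrable_mul_stdPDF.integrableOn
  have htend : Filter.Tendsto (fun z => -stdPDF z) Filter.atTop (nhds 0) := by
    simpa using tendsto_stdPDF_atTop.neg
  have := integral_Ioi_of_hasDerivAt_of_tendsto' hderiv hint htend
  simpa using this

lemma J0 (α : ℝ) : ∫ z in Set.Ioi α, stdPDF z = 1 - stdCDF α := by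
  have h := integral_add_compl (measurableSet_Iic (a := α)) integrable_stdPDF
  rw [Set.compl_Iic] at h
  have : stdCDF α + ∫ z in Set.Ioi α, stdPDF z = 1 := by
    rw [stdCDF, h, integral_stdPDF]
  linarith

lemma Jγ0 (α : ℝ) :
    ∫ z, Set.indicator (Set.Ioi α) (fun _ => (1:ℝ)) z ∂(gaussianReal 0 1)
      = 1 - stdCDF α := by
  rw [integral_stdgauss]
  have : (fun z => Set.indicator (Set.Ioi α) (fun _ => (1:ℝ)) z * stdPDF z)
      = fun z => Set.indicator (Set.Ioi α) stdPDF z := by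
    funext z
    by_cases hz : z ∈ Set.Ioi α <;> simp [hz]
  rw [this, integral_indicator measurableSet_Ioi, J0]

lemma Jγ1 (α : ℝ) :
    ∫ z, Set.indicator (Set.Ioi α) id z ∂(gaussianReal 0 1) = stdPDF α := by
  rw [integral_stdgauss]
  have : (fun z => Set.indicator (Set.Ioi α) id z * stdPDF z)
      = fun z => Set.indicator (Set.Ioi α) (fun z => z * stdPDF z) z := by
    funext z
    by_cases hz : z ∈ Set.Ioi α <;> simp [hz]
  rw [this, integral_indicator measurableSet_Ioi, J1]

noncomputable def logi (k σ x : ℝ) : ℝ := (1 + Real.exp (k * (σ - x)))⁻¹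
noncomputable def logiA (k σ x : ℝ) : ℝ := k⁻¹ * Real.log (1 + Real.exp (k * (x - σ)))

lemma logi_pos (k σ x : ℝ) : 0 < logi k σ x := by
  unfold logi; positivity

lemma logi_le_one (k σ x : ℝ) : logi k σ x ≤ 1 := by
  unfold logi
  rw [inv_le_one_iff₀]
  right
  nlinarith [Real.exp_pos (k * (σ - x))]

lemma logi_abs_le (k σ : ℝ) : ∀ x, |logi k σ x| ≤ 1 := fun x => by
  rw [abs_of_pos (logi_pos k σ x)]; exact logi_le_one k σ x

lemma continuous_logi (k σ : ℝ) : Continuous (logi k σ) := by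
  unfold logi
  refine (continuous_const.add (Real.continuous_exp.comp
    (continuous_const.mul (continuous_const.sub continuous_id)))).inv₀ ?_
  intro x
  have := Real.exp_pos (k * (σ - x))
  show 1 + Real.exp (k * (σ - x)) ≠ 0
  positivity

lemma hasDerivAt_logiA (k σ : ℝ) (hk : 0 < k) (x : ℝ) :
    HasDerivAt (logiA k σ) (logi k σ x) x := by
  have h1 : HasDerivAt (fun y : ℝ => k * (y - σ)) k x := by
    simpa using ((hasDerivAt_id x).sub_const σ).const_mul k
  have h2 := (Real.hasDerivAt_exp (k * (x - σ))).comp x h1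
  have hpos : 0 < 1 + Real.exp (k * (x - σ)) := by positivity
  have h3 : HasDerivAt (fun y : ℝ => 1 + Real.exp (k * (y - σ)))
      (Real.exp (k * (x - σ)) * k) x := by
    exact (h2.const_add 1)
  have h4 := (Real.hasDerivAt_log (ne_of_gt hpos)).comp x h3
  have h5 := h4.const_mul k⁻¹
  have h6 : HasDerivAt (logiA k σ)
      (k⁻¹ * ((1 + Real.exp (k * (x - σ)))⁻¹ * (Real.exp (k * (x - σ)) * k))) x := by
    unfold logiA
    exact h5
  refine h6.congr_deriv ?_
  unfold logi
  rw [show k * (σ - x) = -(k * (x - σ)) by ring, Real.exp_neg]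
  have hE : 0 < Real.exp (k * (x - σ)) := Real.exp_pos _
  have hk' : k ≠ 0 := ne_of_gt hk
  field_simp
  ring

lemma tendsto_logi_gt {σ x : ℝ} (hx : σ < x) :
    Filter.Tendsto (fun n : ℕ => logi ((n : ℝ) + 1) σ x) Filter.atTop (nhds 1) := by
  have h1 : Filter.Tendsto (fun n : ℕ => ((n : ℝ) + 1)) Filter.atTop Filter.atTop :=
    Filter.tendsto_atTop_add_const_right _ 1 tendsto_natCast_atTop_atTop
  have h2 : Filter.Tendsto (fun n : ℕ => ((n : ℝ) + 1) * (σ - x)) Filter.atTop Filter.atBot :=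
    Filter.Tendsto.atTop_mul_const_of_neg (by linarith) h1
  have h3 := Real.tendsto_exp_atBot.comp h2
  have h4 : Filter.Tendsto (fun n : ℕ => 1 + Real.exp (((n : ℝ) + 1) * (σ - x)))
      Filter.atTop (nhds 1) := by
    simpa using tendsto_const_nhds.add h3
  have h5 := h4.inv₀ (one_ne_zero)
  simpa [logi] using h5

lemma tendsto_logi_lt {σ x : ℝ} (hx : x < σ) :
    Filter.Tendsto (fun n : ℕ => logi ((n : ℝ) + 1) σ x) Filter.atTop (nhds 0) := by
  have h1 : Filter.Tendsto (fun n : ℕ => ((n : ℝ) + 1)) Filter.atTop Filter.atTop :=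
    Filter.tendsto_atTop_add_const_right _ 1 tendsto_natCast_atTop_atTop
  have h2 : Filter.Tendsto (fun n : ℕ => ((n : ℝ) + 1) * (σ - x)) Filter.atTop Filter.atTop :=
    h1.atTop_mul_const (by linarith)
  have h3 := Real.tendsto_exp_atTop.comp h2
  have h4 : Filter.Tendsto (fun n : ℕ => 1 + Real.exp (((n : ℝ) + 1) * (σ - x)))
      Filter.atTop Filter.atTop := Filter.tendsto_atTop_add_const_left _ 1 h3
  have h5 := h4.inv_tendsto_atTop
  exact h5

lemma lemA {Ω : Type*} [MeasureSpace Ω] [IsProbabilityMeasure (ℙ : Measure Ω)]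
    (D W : Ω → ℝ) (hD : Measurable D) (hW : Measurable W)
    (μD μW sq vW : ℝ) (hsq : 0 < sq)
    (hlaw : ∀ t : ℝ, Measure.map (fun ω => D ω + t * W ω) ℙ
        = gaussianReal (μD + t * μW) (Real.toNNReal (sq + t ^ 2 * vW)))
    (hDint : Integrable D ℙ) (hWint : Integrable W ℙ)
    (g h : ℝ → ℝ) (hg : ∀ x, HasDerivAt g (h x) x) (hhc : Continuous h)
    (hh1 : ∀ x, |h x| ≤ 1) :
    ∫ ω, W ω * h (D ω) ∂ℙ = μW * ∫ ω, h (D ω) ∂ℙ := by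
  -- g is 1-Lipschitz
  have hgl : LipschitzWith 1 g := by
    apply lipschitzWith_of_nnnorm_deriv_le (fun x => (hg x).differentiableAt)
    intro x
    rw [(hg x).deriv, ← NNReal.coe_le_coe, coe_nnnorm, NNReal.coe_one, Real.norm_eq_abs]
    exact hh1 x
  have hgc : Continuous g := hgl.continuous
  have hgb : ∀ y : ℝ, ‖g y‖ ≤ |g 0| + |y| := by
    intro y
    have := hgl.dist_le_mul y 0
    rw [Real.dist_eq, Real.dist_eq, NNReal.coe_one, one_mul, sub_zero] at this
    calc ‖g y‖ = |g y - g 0 + g 0| := by rw [Real.norm_eq_abs]; ring_nf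
    _ ≤ |g y - g 0| + |g 0| := abs_add_le _ _
    _ ≤ |y| + |g 0| := by linarith
    _ = |g 0| + |y| := by ring
  set ε : ℝ := min (sq / (2 * (|vW| + 1))) 1 with hεdef
  have hε : 0 < ε := lt_min (by positivity) one_pos
  have hε1 : ε ≤ 1 := min_le_right _ _
  have hv2 : ∀ t : ℝ, |t| < ε → sq / 2 ≤ sq + t ^ 2 * vW := by
    intro t ht
    have ht1 : |t| ≤ 1 := le_of_lt (lt_of_lt_of_le ht (min_le_right _ _))
    have ht2 : |t| ≤ sq / (2 * (|vW| + 1)) := le_of_lt (lt_of_lt_of_le ht (min_le_left _ _))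
    have h3 : t ^ 2 ≤ |t| := by nlinarith [sq_abs t, abs_nonneg t]
    have h4 : -(t ^ 2 * |vW|) ≤ t ^ 2 * vW := by nlinarith [neg_abs_le vW, sq_nonneg t]
    have h5 : t ^ 2 * |vW| ≤ (sq / (2 * (|vW| + 1))) * (|vW| + 1) := by
      apply mul_le_mul (le_trans h3 ht2) (by linarith [abs_nonneg vW]) (abs_nonneg vW)
        (by positivity)
    have h7 : (0:ℝ) < |vW| + 1 := by positivity
    have h6 : (sq / (2 * (|vW| + 1))) * (|vW| + 1) = sq / 2 := by
      field_simp
    linarith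
  -- Part 1: probabilistic side
  set F : ℝ → Ω → ℝ := fun t ω => g (D ω + t * W ω) with hFdef
  have hφ : HasDerivAt (fun t => ∫ ω, F t ω ∂ℙ) (∫ ω, W ω * h (D ω) ∂ℙ) 0 := by
    refine (hasDerivAt_integral_of_dominated_loc_of_lip (hs := Metric.ball_mem_nhds (0:ℝ) one_pos)
      (bound := fun ω => |W ω|) ?_ ?_ ?_ ?_ ?_ ?_).2
    · exact Filter.Eventually.of_forall fun t =>
        (hgc.measurable.comp (hD.add (hW.const_mul t))).aestronglyMeasurable
    · refine Integrable.mono' ((integrable_const (|g 0|)).add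
        ((hDint.add (hWint.const_mul 0)).abs) ) ?_ ?_
      · exact (hgc.measurable.comp (hD.add (hW.const_mul 0))).aestronglyMeasurable
      · exact Filter.Eventually.of_forall fun ω => hgb _
    · exact (hW.mul (hhc.measurable.comp hD)).aestronglyMeasurable
    · refine Filter.Eventually.of_forall fun ω => ?_
      have hinner : LipschitzWith ‖W ω‖₊ (fun t => D ω + t * W ω) := by
        apply LipschitzWith.of_dist_le_mul
        intro a b
        rw [Real.dist_eq, Real.dist_eq, coe_nnnorm, Real.norm_eq_abs]
        have : D ω + a * W ω - (D ω + b * W ω) = (a - b) * W ω := by ring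
        rw [this, abs_mul]
        ring_nf
        exact le_refl _
      refine ((hgl.comp hinner).weaken ?_).lipschitzOnWith (s := Metric.ball (0:ℝ) 1)
      rw [← NNReal.coe_le_coe]
      simp [Real.coe_nnabs]
    · exact hWint.abs
    · refine Filter.Eventually.of_forall fun ω => ?_
      have hinner : HasDerivAt (fun t : ℝ => D ω + t * W ω) (W ω) 0 := by
        simpa using ((hasDerivAt_id (0:ℝ)).mul_const (W ω)).const_add (D ω)
      have := (hg (D ω + 0 * W ω)).comp 0 hinner
      refine this.congr_deriv ?_
      simp [mul_comm]
  -- Part 2: explicit side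
  set mm : ℝ → ℝ := fun t => μD + t * μW with hmmdef
  set vf : ℝ → ℝ := fun t => sq + t ^ 2 * vW with hvfdef
  set r : ℝ → ℝ := fun t => Real.sqrt (vf t) with hrdef
  have hvfpos : ∀ t : ℝ, |t| < ε → 0 < vf t := fun t ht =>
    lt_of_lt_of_le (half_pos hsq) (hv2 t ht)
  have hrpos : ∀ t : ℝ, |t| < ε → 0 < r t := fun t ht => Real.sqrt_pos.mpr (hvfpos t ht)
  have hrlb : ∀ t : ℝ, |t| < ε → Real.sqrt (sq / 2) ≤ r t := fun t ht =>
    Real.sqrt_le_sqrt (hv2 t ht)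
  have hmap : ∀ t : ℝ, |t| < ε → Measure.map (fun ω => D ω + t * W ω) ℙ
      = Measure.map (fun z => r t * z + mm t) (gaussianReal 0 1) := by
    intro t ht
    rw [hlaw t, ← gaussianReal_eq_map _ _ (hvfpos t ht)]
  have hψeq : ∀ t : ℝ, |t| < ε →
      (∫ ω, F t ω ∂ℙ) = ∫ z, g (r t * z + mm t) ∂(gaussianReal 0 1) := by
    intro t ht
    have h1 : ∫ ω, F t ω ∂ℙ = ∫ x, g x ∂(Measure.map (fun ω => D ω + t * W ω) ℙ) := by
      rw [integral_map (φ := fun ω => D ω + t * W ω) (hD.add (hW.const_mul t)).aemeasurable hgc.aestronglyMeasurable]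
    rw [h1, hmap t ht, integral_map (by fun_prop) hgc.aestronglyMeasurable]
  -- derivative of the inner map
  have haux : ∀ t : ℝ, |t| < ε → ∀ z : ℝ,
      HasDerivAt (fun t' => g (r t' * z + mm t'))
        (h (r t * z + mm t) * ((t * vW / r t) * z + μW)) t := by
    intro t ht z
    have hvf' : HasDerivAt vf (2 * t * vW) t := by
      have := ((hasDerivAt_pow 2 t).mul_const vW).const_add sq
      refine this.congr_deriv ?_
      ring
    have hr' : HasDerivAt r (t * vW / r t) t := by
      have := (Real.hasDerivAt_sqrt (ne_of_gt (hvfpos t ht))).comp t hvf'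
      refine this.congr_deriv ?_
      rw [hrdef]
      field_simp
    have hmm' : HasDerivAt mm μW t := by
      exact (((hasDerivAt_id t).mul_const μW).const_add μD).congr_deriv (by simp)
    have hinner : HasDerivAt (fun t' => r t' * z + mm t') ((t * vW / r t) * z + μW) t :=
      (hr'.mul_const z).add hmm'
    have := (hg (r t * z + mm t)).comp t hinner
    exact this
  set c2 : ℝ := |vW| / Real.sqrt (sq / 2) with hc2def
  have hc2 : 0 ≤ c2 := by positivity
  have hbnd : ∀ t : ℝ, |t| < ε → ∀ z : ℝ,
      |h (r t * z + mm t) * ((t * vW / r t) * z + μW)| ≤ |μW| + c2 * |z| := by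
    intro t ht z
    rw [abs_mul]
    have h1 : |h (r t * z + mm t)| ≤ 1 := hh1 _
    have h2 : |(t * vW / r t) * z + μW| ≤ |μW| + c2 * |z| := by
      calc |(t * vW / r t) * z + μW| ≤ |(t * vW / r t) * z| + |μW| := abs_add_le _ _
      _ = |t * vW / r t| * |z| + |μW| := by rw [abs_mul]
      _ ≤ c2 * |z| + |μW| := by
          have h3 : |t * vW / r t| ≤ c2 := by
            rw [abs_div, abs_mul, abs_of_pos (hrpos t ht), hc2def]
            have h5 : |t| * |vW| ≤ |vW| := by
              nlinarith [abs_nonneg vW, abs_nonneg t, lt_of_lt_of_le ht hε1]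
            have h6 : (0:ℝ) < Real.sqrt (sq / 2) := Real.sqrt_pos.mpr (by linarith)
            exact div_le_div₀ (abs_nonneg vW) h5 h6 (hrlb t ht)
          nlinarith [abs_nonneg z, h3]
      _ = |μW| + c2 * |z| := by ring
    calc |h (r t * z + mm t)| * |(t * vW / r t) * z + μW|
        ≤ 1 * |(t * vW / r t) * z + μW| :=
          mul_le_mul h1 (le_refl _) (abs_nonneg _) zero_le_one
    _ = |(t * vW / r t) * z + μW| := one_mul _
    _ ≤ |μW| + c2 * |z| := h2
  -- Part 2 continued: derivative of the explicit side
  have hγabs : Integrable (fun z : ℝ => |z|) (gaussianReal 0 1) :=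
    (integrable_id_gaussianReal 0 1).abs
  have hγid : Integrable (fun z : ℝ => z) (gaussianReal 0 1) := integrable_id_gaussianReal 0 1
  have hψ : HasDerivAt (fun t => ∫ z, g (r t * z + mm t) ∂(gaussianReal 0 1))
      (∫ z, h (Real.sqrt sq * z + μD) * μW ∂(gaussianReal 0 1)) 0 := by
    refine (hasDerivAt_integral_of_dominated_loc_of_lip (μ := gaussianReal 0 1)
      (x₀ := (0:ℝ)) (F := fun t z => g (r t * z + mm t))
      (F' := fun z => h (Real.sqrt sq * z + μD) * μW)
      (bound := fun z => |μW| + c2 * |z|) (Metric.ball_mem_nhds (0:ℝ) hε) ?_ ?_ ?_ ?_ ?_ ?_).2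
    · exact Filter.Eventually.of_forall fun t =>
        (hgc.comp ((continuous_const.mul continuous_id).add
          continuous_const)).aestronglyMeasurable
    · refine Integrable.mono' ((integrable_const (|g 0|)).add
        (((hγid.const_mul (r 0)).add (integrable_const (mm 0))).abs)) ?_ ?_
      · exact (hgc.comp ((continuous_const.mul continuous_id).add
          continuous_const)).aestronglyMeasurable
      · exact Filter.Eventually.of_forall fun z => hgb _
    · exact ((hhc.comp ((continuous_const.mul continuous_id).add
        continuous_const)).mul continuous_const).aestronglyMeasurable
    · refine Filter.Eventually.of_forall fun z => ?_
      refine (convex_ball (0:ℝ) ε).lipschitzOnWith_of_nnnorm_hasDerivWithin_le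
        (f' := fun t => h (r t * z + mm t) * ((t * vW / r t) * z + μW)) ?_ ?_
      · intro t htb
        have ht : |t| < ε := by simpa [Real.dist_eq] using htb
        exact (haux t ht z).hasDerivWithinAt
      · intro t htb
        have ht : |t| < ε := by simpa [Real.dist_eq] using htb
        show ‖h (r t * z + mm t) * ((t * vW / r t) * z + μW)‖₊ ≤ Real.nnabs (|μW| + c2 * |z|)
        have h0 : (0:ℝ) ≤ |μW| + c2 * |z| :=
          add_nonneg (abs_nonneg μW) (mul_nonneg hc2 (abs_nonneg z))
        rw [← NNReal.coe_le_coe]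
        simp only [coe_nnnorm, Real.norm_eq_abs, Real.coe_nnabs]
        rw [abs_of_nonneg h0]
        exact hbnd t ht z
    · exact (integrable_const (|μW|)).add (hγabs.const_mul c2)
    · refine Filter.Eventually.of_forall fun z => ?_
      have h0 : |(0:ℝ)| < ε := by simpa using hε
      have hder := haux 0 h0 z
      have hr0 : r 0 = Real.sqrt sq := by simp only [hrdef, hvfdef]; norm_num
      have hm0 : mm 0 = μD := by simp only [hmmdef]; norm_num
      rw [hr0, hm0] at hder
      refine hder.congr_deriv ?_
      norm_num
  have heq : (fun t => ∫ ω, F t ω ∂ℙ) =ᶠ[nhds (0:ℝ)]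
      (fun t => ∫ z, g (r t * z + mm t) ∂(gaussianReal 0 1)) := by
    filter_upwards [Metric.ball_mem_nhds (0:ℝ) hε] with t htb
    exact hψeq t (by simpa [Real.dist_eq] using htb)
  have hψ' : HasDerivAt (fun t => ∫ ω, F t ω ∂ℙ)
      (∫ z, h (Real.sqrt sq * z + μD) * μW ∂(gaussianReal 0 1)) 0 :=
    hψ.congr_of_eventuallyEq heq
  have huniq := hφ.unique hψ'
  rw [huniq, integral_mul_const]
  have hid : ∫ ω, h (D ω) ∂ℙ = ∫ z, h (Real.sqrt sq * z + μD) ∂(gaussianReal 0 1) := by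
    have h0 : |(0:ℝ)| < ε := by simpa using hε
    have hm := hmap 0 h0
    have e1 : ∫ ω, h (D ω) ∂ℙ = ∫ ω, h (D ω + 0 * W ω) ∂ℙ := by simp
    have e2 : ∫ ω, h (D ω + 0 * W ω) ∂ℙ
        = ∫ x, h x ∂(Measure.map (fun ω => D ω + 0 * W ω) ℙ) :=
      (integral_map (hD.add (hW.const_mul 0)).aemeasurable hhc.aestronglyMeasurable).symm
    have e3 : ∫ x, h x ∂(Measure.map (fun z : ℝ => r 0 * z + mm 0) (gaussianReal 0 1))
        = ∫ z, h (r 0 * z + mm 0) ∂(gaussianReal 0 1) :=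
      integral_map (by fun_prop) hhc.aestronglyMeasurable
    rw [e1, e2, hm, e3]
    have hr0 : r 0 = Real.sqrt sq := by simp only [hrdef, hvfdef]; norm_num
    have hm0 : mm 0 = μD := by simp only [hmmdef]; norm_num
    rw [hr0, hm0]
  rw [hid]
  exact mul_comm _ _

lemma integrable_comp_gaussian_map {Ω : Type*} [MeasureSpace Ω] {X : Ω → ℝ}
    (hX : AEMeasurable X ℙ) {m : ℝ} {v : ℝ≥0}
    (h : Measure.map X ℙ = gaussianReal m v) : Integrable X ℙ := by
  have h1 : Integrable id (Measure.map X ℙ) := by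
    rw [h]; exact integrable_id_gaussianReal m v
  rw [integrable_map_measure aestronglyMeasurable_id hX] at h1
  simpa [Function.comp] using h1

theorem main_aux {Ω : Type*} [MeasureSpace Ω] [IsProbabilityMeasure (ℙ : Measure Ω)]
    (U V : Ω → ℝ) (hU : Measurable U) (hV : Measurable V)
    (μx μo Kxx Koo Kxo σ : ℝ)
    (hs : 0 < Kxx + Koo - 2 * Kxo)
    (hjoint : ∀ a b : ℝ,
      Measure.map (fun ω => a * U ω + b * V ω) ℙ =
        gaussianReal (a * μx + b * μo)
          (Real.toNNReal (a ^ 2 * Kxx + b ^ 2 * Koo + 2 * a * b * Kxo))) :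
    (∫ ω, Set.indicator {ω' | V ω' + σ < U ω'} U ω ∂ℙ) =
      μx * (1 - stdCDF ((μo + σ - μx) / Real.sqrt (Kxx + Koo - 2 * Kxo)))
        + ((Kxx - Kxo) / Real.sqrt (Kxx + Koo - 2 * Kxo))
            * stdPDF ((μo + σ - μx) / Real.sqrt (Kxx + Koo - 2 * Kxo)) := by
  set s2 : ℝ := Kxx + Koo - 2 * Kxo with hs2d
  have hs2pos : 0 < s2 := hs
  set s : ℝ := Real.sqrt s2 with hsd
  have hspos : 0 < s := Real.sqrt_pos.mpr hs2pos
  have hss : s * s = s2 := Real.mul_self_sqrt hs2pos.le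
  set c : ℝ := (Kxx - Kxo) / s2 with hcd
  have hc : c * s2 = Kxx - Kxo := by
    rw [hcd]; field_simp
  set D : Ω → ℝ := fun ω => U ω - V ω with hDd
  set W : Ω → ℝ := fun ω => U ω - c * (U ω - V ω) with hWd
  have hDmeas : Measurable D := hU.sub hV
  have hWmeas : Measurable W := hU.sub ((hU.sub hV).const_mul c)
  set μD : ℝ := μx - μo with hμDd
  set μW : ℝ := μx - c * (μx - μo) with hμWd
  set vW : ℝ := (1 - c) ^ 2 * Kxx + c ^ 2 * Koo + 2 * (1 - c) * c * Kxo with hvWd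
  have hlaw : ∀ t : ℝ, Measure.map (fun ω => D ω + t * W ω) ℙ
      = gaussianReal (μD + t * μW) (Real.toNNReal (s2 + t ^ 2 * vW)) := by
    intro t
    have hj := hjoint (1 + t * (1 - c)) (t * c - 1)
    have hfun : (fun ω => (1 + t * (1 - c)) * U ω + (t * c - 1) * V ω)
        = fun ω => D ω + t * W ω := by
      funext ω
      simp only [hDd, hWd]
      ring
    rw [hfun] at hj
    rw [hj]
    congr 1
    · simp only [hμDd, hμWd]; ring
    · congr 1
      simp only [hs2d, hvWd]
      have hc' : c * (Kxx + Koo - 2 * Kxo) = Kxx - Kxo := by rw [← hs2d]; exact hc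
      linear_combination (-2 * t) * hc'
  -- integrability
  have hD0 : Integrable (fun ω => D ω + (0:ℝ) * W ω) ℙ :=
    integrable_comp_gaussian_map (hDmeas.add (hWmeas.const_mul 0)).aemeasurable (hlaw 0)
  have hDint : Integrable D ℙ := by simpa using hD0
  have hD1 : Integrable (fun ω => D ω + (1:ℝ) * W ω) ℙ :=
    integrable_comp_gaussian_map (hDmeas.add (hWmeas.const_mul 1)).aemeasurable (hlaw 1)
  have hWint : Integrable W ℙ := by
    have h1 := hD1.sub hDint
    refine h1.congr (Filter.Eventually.of_forall fun ω => ?_)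
    simp
  -- key identity from lemA
  have key : ∀ n : ℕ, ∫ ω, W ω * logi ((n:ℝ)+1) σ (D ω) ∂ℙ
      = μW * ∫ ω, logi ((n:ℝ)+1) σ (D ω) ∂ℙ := fun n =>
    lemA D W hDmeas hWmeas μD μW s2 vW hs2pos hlaw hDint hWint
      (logiA ((n:ℝ)+1) σ) (logi ((n:ℝ)+1) σ)
      (hasDerivAt_logiA _ σ (by positivity)) (continuous_logi _ _) (logi_abs_le _ _)
  -- law of D
  have hmapD : Measure.map D ℙ = gaussianReal μD s2.toNNReal := by
    have h0 := hlaw 0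
    have hfun : (fun ω => D ω + (0:ℝ) * W ω) = D := by funext ω; ring
    rw [hfun] at h0
    rw [h0]
    congr 1
    · ring
    · congr 1
      ring
  -- D is a.s. not equal to σ
  have hvne : s2.toNNReal ≠ 0 := by
    simp only [ne_eq, Real.toNNReal_eq_zero, not_le]
    exact hs2pos
  have hDne : ∀ᵐ ω ∂ℙ, D ω ≠ σ := by
    have hns : ℙ (D ⁻¹' {σ}) = 0 := by
      rw [← Measure.map_apply hDmeas (measurableSet_singleton σ), hmapD]
      exact gaussianReal_absolutelyContinuous _ hvne Real.volume_singleton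
    rw [ae_iff]
    convert hns using 2
    ext ω
    simp
  set A : Set Ω := {ω | σ < D ω} with hAd
  have hAmeas : MeasurableSet A := measurableSet_lt measurable_const hDmeas
  -- limits
  have hlimL : Filter.Tendsto (fun n : ℕ => ∫ ω, W ω * logi ((n:ℝ)+1) σ (D ω) ∂ℙ)
      Filter.atTop (nhds (∫ ω, A.indicator W ω ∂ℙ)) := by
    refine tendsto_integral_of_dominated_convergence (fun ω => |W ω|)
      (fun n => (hWmeas.mul ((continuous_logi _ _).measurable.comp hDmeas)).aestronglyMeasurable)
      hWint.abs (fun n => Filter.Eventually.of_forall fun ω => ?_) ?_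
    · rw [Real.norm_eq_abs, abs_mul]
      exact mul_le_of_le_one_right (abs_nonneg _) (logi_abs_le _ _ _)
    · filter_upwards [hDne] with ω hω
      rcases hω.lt_or_gt with h | h
      · have hnot : ω ∉ A := by simp [hAd]; linarith
        rw [Set.indicator_of_notMem hnot]
        simpa using (tendsto_logi_lt h).const_mul (W ω)
      · have hmem : ω ∈ A := h
        rw [Set.indicator_of_mem hmem]
        simpa using (tendsto_logi_gt h).const_mul (W ω)
  have hlimR : Filter.Tendsto (fun n : ℕ => μW * ∫ ω, logi ((n:ℝ)+1) σ (D ω) ∂ℙ)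
      Filter.atTop (nhds (μW * ∫ ω, A.indicator (fun _ => (1:ℝ)) ω ∂ℙ)) := by
    refine Filter.Tendsto.const_mul μW ?_
    refine tendsto_integral_of_dominated_convergence (fun _ => (1:ℝ))
      (fun n => ((continuous_logi _ _).measurable.comp hDmeas).aestronglyMeasurable)
      (integrable_const 1) (fun n => Filter.Eventually.of_forall fun ω => ?_) ?_
    · rw [Real.norm_eq_abs]
      exact logi_abs_le _ _ _
    · filter_upwards [hDne] with ω hω
      rcases hω.lt_or_gt with h | h
      · have hnot : ω ∉ A := by simp [hAd]; linarith
        rw [Set.indicator_of_notMem hnot]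
        exact tendsto_logi_lt h
      · have hmem : ω ∈ A := h
        rw [Set.indicator_of_mem hmem]
        exact tendsto_logi_gt h
  have hWind : ∫ ω, A.indicator W ω ∂ℙ = μW * ∫ ω, A.indicator (fun _ => (1:ℝ)) ω ∂ℙ :=
    tendsto_nhds_unique hlimL (hlimR.congr fun n => (key n).symm)
  -- pushforward computations
  set α : ℝ := (μo + σ - μx) / s with hαd
  have hγmap : Measure.map D ℙ
      = Measure.map (fun z => s * z + μD) (gaussianReal 0 1) := by
    rw [hmapD, gaussianReal_eq_map _ _ hs2pos]
  have hmem : ∀ z : ℝ, (σ < s * z + μD) ↔ α < z := by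
    intro z
    rw [hαd, div_lt_iff₀ hspos, hμDd]
    constructor <;> intro hh <;> nlinarith
  have P1 : ∫ ω, A.indicator (fun _ => (1:ℝ)) ω ∂ℙ = 1 - stdCDF α := by
    have e : (fun ω => A.indicator (fun _ => (1:ℝ)) ω)
        = fun ω => (Set.Ioi σ).indicator (fun _ => (1:ℝ)) (D ω) := by
      funext ω
      by_cases h : σ < D ω
      · rw [Set.indicator_of_mem (show ω ∈ A from h),
          Set.indicator_of_mem (Set.mem_Ioi.mpr h)]
      · rw [Set.indicator_of_notMem (show ω ∉ A from h),
          Set.indicator_of_notMem (by simpa using h)]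
    rw [e]
    have hFsm : AEStronglyMeasurable ((Set.Ioi σ).indicator (fun _ => (1:ℝ)))
        (Measure.map D ℙ) :=
      (measurable_const.indicator measurableSet_Ioi).aestronglyMeasurable
    rw [← integral_map hDmeas.aemeasurable hFsm]
    rw [hγmap, integral_map (by fun_prop)
      ((measurable_const.indicator measurableSet_Ioi).aestronglyMeasurable)]
    have e2 : (fun z => (Set.Ioi σ).indicator (fun _ => (1:ℝ)) (s * z + μD))
        = fun z => (Set.Ioi α).indicator (fun _ => (1:ℝ)) z := by
      funext z
      by_cases h : α < z
      · rw [Set.indicator_of_mem (Set.mem_Ioi.mpr ((hmem z).mpr h)),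
          Set.indicator_of_mem (Set.mem_Ioi.mpr h)]
      · rw [Set.indicator_of_notMem (by simp [Set.mem_Ioi, (hmem z).not.mpr h] ),
          Set.indicator_of_notMem (by simpa using h)]
    rw [e2, Jγ0]
  have P2 : ∫ ω, A.indicator D ω ∂ℙ = μD * (1 - stdCDF α) + s * stdPDF α := by
    have e : (fun ω => A.indicator D ω)
        = fun ω => (Set.Ioi σ).indicator id (D ω) := by
      funext ω
      by_cases h : σ < D ω
      · rw [Set.indicator_of_mem (show ω ∈ A from h),
          Set.indicator_of_mem (Set.mem_Ioi.mpr h)]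
        rfl
      · rw [Set.indicator_of_notMem (show ω ∉ A from h),
          Set.indicator_of_notMem (by simpa using h)]
    rw [e]
    have hFsm : AEStronglyMeasurable ((Set.Ioi σ).indicator (id : ℝ → ℝ))
        (Measure.map D ℙ) :=
      (measurable_id.indicator measurableSet_Ioi).aestronglyMeasurable
    rw [← integral_map hDmeas.aemeasurable hFsm]
    rw [hγmap, integral_map (by fun_prop)
      ((measurable_id.indicator measurableSet_Ioi).aestronglyMeasurable)]
    have e2 : (fun z => (Set.Ioi σ).indicator (id : ℝ → ℝ) (s * z + μD))
        = fun z => s * (Set.Ioi α).indicator id z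
            + μD * (Set.Ioi α).indicator (fun _ => (1:ℝ)) z := by
      funext z
      by_cases h : α < z
      · rw [Set.indicator_of_mem (Set.mem_Ioi.mpr ((hmem z).mpr h)),
          Set.indicator_of_mem (Set.mem_Ioi.mpr h),
          Set.indicator_of_mem (Set.mem_Ioi.mpr h)]
        simp only [id_eq]
        ring
      · rw [Set.indicator_of_notMem (by simp [Set.mem_Ioi, (hmem z).not.mpr h]),
          Set.indicator_of_notMem (by simpa using h),
          Set.indicator_of_notMem (by simpa using h)]
        ring
    rw [e2]
    have hint1 : Integrable (fun z => s * (Set.Ioi α).indicator (id : ℝ → ℝ) z)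
        (gaussianReal 0 1) :=
      ((integrable_id_gaussianReal 0 1).indicator measurableSet_Ioi).const_mul s
    have hint2 : Integrable (fun z => μD * (Set.Ioi α).indicator (fun _ => (1:ℝ)) z)
        (gaussianReal 0 1) :=
      ((integrable_const (1:ℝ)).indicator measurableSet_Ioi).const_mul μD
    rw [integral_add hint1 hint2, integral_const_mul, integral_const_mul, Jγ1, Jγ0]
    ring
  -- assembling
  have e1 : {ω' | V ω' + σ < U ω'} = A := by
    ext ω
    simp only [Set.mem_setOf_eq, hAd, hDd]
    constructor <;> intro <;> linarith
  rw [e1]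
  have e2 : (fun ω => A.indicator U ω)
      = fun ω => c * A.indicator D ω + A.indicator W ω := by
    funext ω
    by_cases h : ω ∈ A
    · rw [Set.indicator_of_mem h, Set.indicator_of_mem h, Set.indicator_of_mem h]
      simp only [hDd, hWd]
      ring
    · rw [Set.indicator_of_notMem h, Set.indicator_of_notMem h,
        Set.indicator_of_notMem h]
      ring
  rw [e2]
  rw [integral_add ((hDint.indicator hAmeas).const_mul c) (hWint.indicator hAmeas),
    integral_const_mul, P2, hWind, P1]
  have h2 : c * s = (Kxx - Kxo) / s := by
    rw [hcd, ← hss]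
    field_simp
  simp only [hμWd, hμDd]
  linear_combination (stdPDF α) * h2

/-- Expected utility of `U` on the event `U > V + σ`, for a bivariate Gaussian
vector `(U, V)`; joint Gaussianity is encoded via linear combinations. -/
theorem expected_utility_threshold_comparison
    {Ω : Type*} [MeasureSpace Ω] [IsProbabilityMeasure (ℙ : Measure Ω)]
    (U V : Ω → ℝ) (μx μo Kxx Koo Kxo σ : ℝ) (hσ : 0 < σ)
    (hs : 0 < Kxx + Koo - 2 * Kxo)
    (hjoint : ∀ a b : ℝ,
      Measure.map (fun ω => a * U ω + b * V ω) ℙ =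
        gaussianReal (a * μx + b * μo)
          (Real.toNNReal (a ^ 2 * Kxx + b ^ 2 * Koo + 2 * a * b * Kxo))) :
    (∫ ω, Set.indicator {ω' | V ω' + σ < U ω'} U ω ∂ℙ) =
      μx * (1 - stdCDF ((μo + σ - μx) / Real.sqrt (Kxx + Koo - 2 * Kxo)))
        + ((Kxx - Kxo) / Real.sqrt (Kxx + Koo - 2 * Kxo))
            * stdPDF ((μo + σ - μx) / Real.sqrt (Kxx + Koo - 2 * Kxo)) := by
  have hUae : AEMeasurable U ℙ := by
    have h := aemeasurable_of_map_neZero (f := fun ω => 1 * U ω + 0 * V ω) (μ := ℙ)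
      (by rw [hjoint 1 0]; infer_instance)
    simpa using h
  have hVae : AEMeasurable V ℙ := by
    have h := aemeasurable_of_map_neZero (f := fun ω => 0 * U ω + 1 * V ω) (μ := ℙ)
      (by rw [hjoint 0 1]; infer_instance)
    simpa using h
  set U' := hUae.mk U with hU'd
  set V' := hVae.mk V with hV'd
  have hU'm : Measurable U' := hUae.measurable_mk
  have hV'm : Measurable V' := hVae.measurable_mk
  have hUe : U =ᵐ[ℙ] U' := hUae.ae_eq_mk
  have hVe : V =ᵐ[ℙ] V' := hVae.ae_eq_mk
  have hjoint' : ∀ a b : ℝ,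
      Measure.map (fun ω => a * U' ω + b * V' ω) ℙ =
        gaussianReal (a * μx + b * μo)
          (Real.toNNReal (a ^ 2 * Kxx + b ^ 2 * Koo + 2 * a * b * Kxo)) := by
    intro a b
    rw [← hjoint a b]
    refine (Measure.map_congr ?_).symm
    filter_upwards [hUe, hVe] with ω h1 h2
    rw [h1, h2]
  have hmain := main_aux U' V' hU'm hV'm μx μo Kxx Koo Kxo σ hs hjoint'
  rw [← hmain]
  apply integral_congr_ae
  filter_upwards [hUe, hVe] with ω h1 h2
  by_cases h : V ω + σ < U ω
  · rw [Set.indicator_of_mem (show ω ∈ {ω' | V ω' + σ < U ω'} from h),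
      Set.indicator_of_mem (show ω ∈ {ω' | V' ω' + σ < U' ω'} from by
        simp only [Set.mem_setOf_eq, ← h1, ← h2]; exact h), h1]
  · rw [Set.indicator_of_notMem (show ω ∉ {ω' | V ω' + σ < U ω'} from h),
      Set.indicator_of_notMem (show ω ∉ {ω' | V' ω' + σ < U' ω'} from by
        simp only [Set.mem_setOf_eq, ← h1, ← h2]; exact h)]
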